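/- For every real pyramid p and every real interval J, it is not the case that both p + 1_J is a real pyramid and (p ≥ 1 on J and p − 1_J is a real pyramid); that is, no interval is simultaneously addable and removable for p. -/

import Mathlib

noncomputable section
open Function
open scoped Classical

/-- The `ℕ`-valued indicator function of the interval `[a, b)`. -/
def ind (a b : ℝ) : ℝ → ℕ := (Set.Ico a b).indicator fun _ => 1

/-- A real pyramid: a function `p : ℝ → ℕ` vanishing outside a bounded set, maximal at `0`,
nondecreasing on `(-∞, 0]`, nonincreasing on `[0, ∞)`, right-continuous and piecewise
constant with finitely many discontinuities, and with jumps of size at most 1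
(`p₋(x)` is the left limit of `p` at `x`). -/
def IsRealPyramid (p : ℝ → ℕ) : Prop :=
  (∃ M : ℝ, ∀ x : ℝ, M ≤ |x| → p x = 0) ∧
  (∀ x, p x ≤ p 0) ∧
  (∀ ⦃x y : ℝ⦄, x ≤ y → y ≤ 0 → p x ≤ p y) ∧
  (∀ ⦃x y : ℝ⦄, 0 ≤ x → x ≤ y → p y ≤ p x) ∧
  (∀ x, ContinuousWithinAt p (Set.Ici x) x) ∧
  {x : ℝ | ¬ ContinuousAt p x}.Finite ∧
  (∀ x, |(p x : ℤ) - ((Function.leftLim p x : ℕ) : ℤ)| ≤ 1)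

/-- The interval `[a, b)` is addable for `p` if `p + 1_{[a,b)}` is again a real pyramid. -/
def Addable (p : ℝ → ℕ) (a b : ℝ) : Prop := IsRealPyramid (fun x => p x + ind a b x)

/-- The interval `[a, b)` is removable for `p` if `p ≥ 1` on `[a, b)` and `p − 1_{[a,b)}`
is again a real pyramid. -/
def Removable (p : ℝ → ℕ) (a b : ℝ) : Prop :=
  (∀ x ∈ Set.Ico a b, 1 ≤ p x) ∧ IsRealPyramid (fun x => p x - ind a b x)

/-- `n_J(p)`: `1` if `J = [a,b)` is addable for `p`, `−1` if removable, `0` otherwise. -/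
def nJ (p : ℝ → ℕ) (a b : ℝ) : ℤ :=
  if Addable p a b then 1 else if Removable p a b then -1 else 0

section AuxLemmas
open Function Filter Set


/-- Near any point, on the left, a function with finitely many discontinuities
into `ℕ` is eventually constant. -/
lemma eventually_const_left {p : ℝ → ℕ} (hS : {x : ℝ | ¬ ContinuousAt p x}.Finite)
    (a : ℝ) : ∃ c : ℕ, ∀ᶠ x in nhdsWithin a (Set.Iio a), p x = c := by
  set S := {x : ℝ | ¬ ContinuousAt p x} with hSdef
  obtain ⟨ε, hε, hcont⟩ : ∃ ε > 0, ∀ x ∈ Set.Ioo (a - ε) a, ContinuousAt p x := by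
    by_cases hT : (S ∩ Set.Iio a).Nonempty
    · have hfin : (S ∩ Set.Iio a).Finite := hS.subset Set.inter_subset_left
      set F := hfin.toFinset with hF
      have hFne : F.Nonempty := by simpa [hF] using hT
      set m := F.max' hFne with hm
      have hmS : m ∈ S ∩ Set.Iio a := by
        exact hfin.mem_toFinset.mp (F.max'_mem hFne)
      have hma : m < a := hmS.2
      refine ⟨a - m, by linarith, fun x hx => ?_⟩
      by_contra hx'
      have hxF : x ∈ F := by
        exact hfin.mem_toFinset.mpr ⟨hx', hx.2⟩
      have h1 := F.le_max' x hxF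
      have h2 : m < x := by linarith [hx.1]
      linarith
    · refine ⟨1, one_pos, fun x hx => ?_⟩
      by_contra hx'
      exact hT ⟨x, hx', hx.2⟩
  have hne : (Set.Ioo (a - ε) a).Nonempty := ⟨a - ε/2, by constructor <;> linarith⟩
  obtain ⟨x₀, hx₀⟩ := hne
  refine ⟨p x₀, ?_⟩
  have hconn : (p '' Set.Ioo (a - ε) a).Subsingleton := by
    have : IsPreconnected (p '' Set.Ioo (a - ε) a) :=
      (isPreconnected_Ioo).image p (fun x hx => (hcont x hx).continuousWithinAt)
    exact this.subsingleton
  have hmem : Set.Ioo (a - ε) a ∈ nhdsWithin a (Set.Iio a) :=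
    Ioo_mem_nhdsLT_of_mem ⟨by linarith, le_refl a⟩
  filter_upwards [hmem] with x hx
  exact hconn ⟨x, hx, rfl⟩ ⟨x₀, hx₀, rfl⟩

lemma leftLim_of_eventually_const {f : ℝ → ℕ} {a : ℝ} {c : ℕ}
    (h : ∀ᶠ x in nhdsWithin a (Set.Iio a), f x = c) : Function.leftLim f a = c := by
  refine leftLim_eq_of_tendsto (h := ⟨?_⟩) ?_
  · exact (inferInstance : (nhdsWithin a (Set.Iio a)).NeBot).ne'
  · exact Tendsto.congr' (by filter_upwards [h] with x hx using hx.symm) tendsto_const_nhds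

end AuxLemmas

/-- no real interval is simultaneously addable and removable for a real
pyramid `p`. -/
theorem not_addable_and_removable (p : ℝ → ℕ) (hp : IsRealPyramid p) (a b : ℝ) (hab : a < b) :
    ¬ (Addable p a b ∧ Removable p a b) := by
  rintro ⟨hA, hR⟩
  obtain ⟨c, hc⟩ := eventually_const_left hp.2.2.2.2.2.1 a
  have hindlt : ∀ x : ℝ, x < a → ind a b x = 0 := fun x hx => by
    unfold ind
    exact Set.indicator_of_notMem (show x ∉ Set.Ico a b from fun h => absurd h.1 (not_le.2 hx)) _
  have hinda : ind a b a = 1 := by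
    unfold ind
    exact Set.indicator_of_mem (show a ∈ Set.Ico a b from ⟨le_refl a, hab⟩) _
  have hev : ∀ᶠ x in nhdsWithin a (Set.Iio a), p x = c ∧ ind a b x = 0 := by
    filter_upwards [hc, self_mem_nhdsWithin] with x h1 h2
    exact ⟨h1, hindlt x h2⟩
  have hq : Function.leftLim (fun x => p x + ind a b x) a = c := by
    apply leftLim_of_eventually_const
    filter_upwards [hev] with x hx
    simp [hx.1, hx.2]
  have hr : Function.leftLim (fun x => p x - ind a b x) a = c := by
    apply leftLim_of_eventually_const
    filter_upwards [hev] with x hx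
    simp [hx.1, hx.2]
  have hpa1 : 1 ≤ p a := hR.1 a ⟨le_refl a, hab⟩
  have jA := hA.2.2.2.2.2.2 a
  have jR := (hR.2).2.2.2.2.2.2 a
  simp only [hq, hinda, abs_le] at jA
  simp only [hr, hinda, abs_le] at jR
  rcases le_or_gt a 0 with ha0 | ha0
  · obtain ⟨x, hpx, hxa⟩ := (hc.and (eventually_mem_nhdsWithin)).exists
    have hmon := (hR.2).2.2.1 (le_of_lt hxa) ha0
    simp only [hpx, hindlt x hxa, hinda] at hmon
    -- hmon : c - 0 ≤ p a - 1 (in ℕ), jA : (p a + 1 : ℤ) - c ≤ 1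
    omega
  · have hmemIoo : ∀ᶠ x in nhdsWithin a (Set.Iio a), x ∈ Set.Ioo (0:ℝ) a :=
      Filter.eventually_mem_set.mpr (Ioo_mem_nhdsLT_of_mem ⟨ha0, le_refl a⟩)
    obtain ⟨x, hpx, hx0a⟩ := (hc.and hmemIoo).exists
    have hmon := hA.2.2.2.1 (le_of_lt hx0a.1) (le_of_lt hx0a.2)
    simp only [hpx, hindlt x hx0a.2, hinda] at hmon
    -- hmon : p a + 1 ≤ c + 0, jR : c - (p a - 1) ≤ 1
    omega
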